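/- arXiv:1507.05933 — 2 statements merged into one kernel-verified Lean document; each statement's English description precedes it below -/
import Mathlib

section
/- Let G be the graph obtained by taking three disjoint copies of the diamond K₄ − e, and a new vertex u joined by an edge to a degree-2 vertex of each copy. Then G is subcubic, lies in G¹ (all odd cycles are triangles), and L(G) has no kernel-perfect orientation with all out-degrees at most 2; in particular G is not 3-edge-orientable. -/
open SimpleGraph

/-- Adjacency in the line graph `L(G)`: two distinct edges sharing an endpoint. -/
def lineAdj {V : Type*} (G : SimpleGraph V) (e f : G.edgeSet) : Prop :=
  e ≠ f ∧ ∃ x : V, x ∈ (e : Sym2 V) ∧ x ∈ (f : Sym2 V)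

/-- `D` is an orientation of the (loopless) adjacency relation `Adj`:
every arc of `D` is an edge, and every edge gets at least one of its two arcs. -/
def IsOrientation {α : Type*} (Adj : α → α → Prop) (D : α → α → Prop) : Prop :=
  (∀ a b, D a b → Adj a b) ∧ (∀ a b, Adj a b → D a b ∨ D b a)

/-- A digraph (relation) is kernel-perfect if every induced subdigraph has a kernel:
an independent set `S` such that every vertex outside `S` has an out-neighbor in `S`. -/
def KernelPerfect {α : Type*} (D : α → α → Prop) : Prop :=
  ∀ Z : Set α, ∃ S ⊆ Z, (∀ a ∈ S, ∀ b ∈ S, ¬ D a b) ∧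
    ∀ z ∈ Z, z ∉ S → ∃ s ∈ S, D z s

/-- Out-degree of a vertex in a digraph given as a relation. -/
noncomputable def outDeg {α : Type*} (D : α → α → Prop) (a : α) : ℕ := {b | D a b}.ncard

/-- Degree of a vertex. -/
noncomputable def deg {V : Type*} (G : SimpleGraph V) (v : V) : ℕ := (G.neighborSet v).ncard

/-- Maximum degree. -/
noncomputable def maxDeg {V : Type*} (G : SimpleGraph V) : ℕ := sSup (Set.range (deg G))

/-- `G` is `f`-edge-orientable: `L(G)` admits a kernel-perfect orientation with
`1 + d⁺(e) ≤ f e` for every edge `e`. -/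
def EdgeOrientable {V : Type*} (G : SimpleGraph V) (f : G.edgeSet → ℕ) : Prop :=
  ∃ D : G.edgeSet → G.edgeSet → Prop,
    IsOrientation (lineAdj G) D ∧ KernelPerfect D ∧ ∀ e, outDeg D e + 1 ≤ f e

open Classical in
/-- The function `f_{k,v}`: `deg v` on edges incident to `v`, and `k` elsewhere. -/
noncomputable def fkv {V : Type*} (G : SimpleGraph V) (k : ℕ) (v : V) (e : G.edgeSet) : ℕ :=
  if v ∈ (e : Sym2 V) then deg G v else k

/-- `G` is strongly `k`-edge-orientable. -/
def StronglyEdgeOrientable {V : Type*} (G : SimpleGraph V) (k : ℕ) : Prop :=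
  ∀ v : V, EdgeOrientable G (fkv G k v)

/-- `G` is `f`-edge-choosable. -/
def FEdgeChoosable {V : Type*} (G : SimpleGraph V) (f : G.edgeSet → ℕ) : Prop :=
  ∀ ℓ : G.edgeSet → Finset ℕ, (∀ e, f e ≤ (ℓ e).card) →
    ∃ φ : G.edgeSet → ℕ, (∀ e, φ e ∈ ℓ e) ∧
      ∀ e₁ e₂, lineAdj G e₁ e₂ → φ e₁ ≠ φ e₂

/-- `G ∈ G*`: any two distinct odd cycles share at most one edge. -/
def InGStar {V : Type*} (G : SimpleGraph V) : Prop :=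
  ∀ (u w : V) (c₁ : G.Walk u u) (c₂ : G.Walk w w),
    c₁.IsCycle → c₂.IsCycle → Odd c₁.length → Odd c₂.length →
    {e | e ∈ c₁.edges} ≠ {e | e ∈ c₂.edges} →
    ({e | e ∈ c₁.edges} ∩ {e | e ∈ c₂.edges}).ncard ≤ 1

/-- `G` is 2-connected: connected, and still connected after deleting any one vertex. -/
def TwoConn {V : Type*} (G : SimpleGraph V) : Prop :=
  G.Connected ∧ ∀ v : V, (G.induce {w | w ≠ v}).Connected

/-- A block of `G`: a maximal 2-connected subgraph. -/
def IsBlock {V : Type*} (G : SimpleGraph V) (B : G.Subgraph) : Prop :=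
  TwoConn B.coe ∧ ∀ B' : G.Subgraph, TwoConn B'.coe → B ≤ B' → B = B'

/-- Vertex type of the theta graph with path lengths `l`: two hubs
(`Sum.inl false`, `Sum.inl true`) plus the internal vertices of each path. -/
def ThetaVert (l : List ℕ) : Type := Bool ⊕ (Σ i : Fin l.length, Fin (l.get i - 1))

/-- The theta graph `Θ_{l₁,…,l_k}`: two hubs joined by internally disjoint paths,
the `i`-th of length `l i`. -/
def thetaGraph (l : List ℕ) : SimpleGraph (ThetaVert l) :=
  SimpleGraph.fromRel (fun a b =>
    match a, b with
    | Sum.inl false, Sum.inl true => 1 ∈ l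
    | Sum.inl false, Sum.inr ⟨_, j⟩ => j.val = 0
    | Sum.inl true, Sum.inr ⟨i, j⟩ => j.val = l.get i - 2
    | Sum.inr ⟨i, j⟩, Sum.inr ⟨i', j'⟩ => i.val = i'.val ∧ j'.val = j.val + 1
    | _, _ => False)

/-- `v` (outside `c`) touches `w ∈ c`: some `v,w`-path meets `c` only at `w`. -/
def Touches {V : Type*} (G : SimpleGraph V) {u : V} (c : G.Walk u u) (v w : V) : Prop :=
  w ∈ c.support ∧ ∃ p : G.Walk v w, p.IsPath ∧ ∀ x ∈ p.support, x ∈ c.support → x = w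

/-- The diamond graph `K₄ − e` on vertices `0, 1, 2, 3` with edges
`01, 02, 12, 13, 23`; the vertices `0` and `3` have degree 2. -/
def diamondRel (a b : Fin 4) : Prop :=
  (a, b) ∈ [((0 : Fin 4), (1 : Fin 4)), (0, 2), (1, 2), (1, 3), (2, 3)]

/-- Three disjoint diamonds plus a hub vertex joined to the degree-2 vertex `0`
of each copy. -/
def tripleDiamond : SimpleGraph (Fin 3 × Fin 4 ⊕ Unit) :=
  SimpleGraph.fromRel (fun a b =>
    match a, b with
    | Sum.inl (i, x), Sum.inl (j, y) => i = j ∧ diamondRel x y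
    | Sum.inl (_, x), Sum.inr _ => x = 0
    | _, _ => False)


instance ddr : DecidableRel diamondRel := fun a b => by
  unfold diamondRel; infer_instance

instance dta : DecidableRel tripleDiamond.Adj := fun a b => by
  rw [tripleDiamond, SimpleGraph.fromRel_adj]
  rcases a with ⟨i,x⟩|u <;> rcases b with ⟨j,y⟩|u' <;> dsimp only <;> infer_instance

lemma part1 : ∀ v, deg tripleDiamond v ≤ 3 := by
  intro v
  rw [deg, Set.ncard_eq_toFinset_card']
  revert v; decide

abbrev V3 := Fin 3 × Fin 4 ⊕ Unit
def hub : V3 := Sum.inr ()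

def comp : V3 → Option (Fin 3)
  | Sum.inl (i,_) => some i
  | Sum.inr _ => none

lemma adj_comp {a b : V3} (h : tripleDiamond.Adj a b) (ha : a ≠ hub) (hb : b ≠ hub) :
    comp a = comp b := by
  rw [tripleDiamond, fromRel_adj] at h
  rcases a with ⟨i,x⟩|u
  · rcases b with ⟨j,y⟩|u'
    · rcases h.2 with ⟨h,-⟩|⟨h,-⟩ <;> simp [comp, h]
    · exact absurd rfl hb
  · exact absurd rfl ha

lemma adj_hub {a : V3} (h : tripleDiamond.Adj hub a) : ∃ i, a = Sum.inl (i, 0) := by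
  rw [tripleDiamond, fromRel_adj] at h
  rcases a with ⟨i,x⟩|u
  · rcases h.2 with h|⟨h,-⟩
    · exact h.elim
    · exact ⟨i, by simp [h]⟩
  · exact absurd rfl h.1

lemma walk_comp : ∀ {a b : V3} (p : tripleDiamond.Walk a b),
    (∀ x ∈ p.support, x ≠ hub) → ∀ x ∈ p.support, comp x = comp a := by
  intro a b p
  induction p with
  | nil => intro _ x hx; simp_all [SimpleGraph.Walk.support_nil]
  | @cons u v w h p ih =>
    intro hh x hx
    have hu : u ≠ hub := hh u (by simp)
    have hv : v ≠ hub := hh v (by simp)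
    have hcomp : comp v = comp u := (adj_comp h hu hv).symm
    rcases (by simpa using hx : x = u ∨ x ∈ p.support) with rfl|hx'
    · rfl
    · rw [ih (fun y hy => hh y (by simp [hy])) x hx', hcomp]

lemma no_cycle_at_hub (c' : tripleDiamond.Walk hub hub) (hcyc : c'.IsCycle) : False := by
  have h3 : 3 ≤ c'.length := hcyc.three_le_length
  cases c' with
  | nil => simp at h3
  | @cons _ v1 _ h q =>
    obtain ⟨i, rfl⟩ := adj_hub h
    -- q : Walk (inl (i,0)) hub
    have hq : q.support.Nodup := by
      have := hcyc.2
      simpa using this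
    -- decompose q from the end
    cases hqr : q.reverse with
    | @cons _ v2 _ h2 r =>
      obtain ⟨j, rfl⟩ := adj_hub h2
      have hqq : q = (SimpleGraph.Walk.cons h2 r).reverse := by
        rw [← hqr, SimpleGraph.Walk.reverse_reverse]
      have hsupp : q.support = r.reverse.support ++ [hub] := by
        rw [hqq]
        rw [SimpleGraph.Walk.support_reverse, SimpleGraph.Walk.support_cons]
        simp [SimpleGraph.Walk.support_reverse]
      rw [hsupp] at hq
      have hnodup := hq
      have hhub_notin : hub ∉ r.reverse.support := by
        have := List.disjoint_of_nodup_append hnodup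
        intro hx; exact this hx (by simp)
      have hrnodup : r.reverse.support.Nodup := (List.nodup_append.mp hnodup).1
      -- r.reverse : Walk (inl (i,0)) (inl (j,0))
      have hcompeq : comp (Sum.inl (j,0) : V3) = comp (Sum.inl (i,0) : V3) := by
        refine walk_comp r.reverse (fun x hx => ?_) _ (SimpleGraph.Walk.end_mem_support _)
        intro hxe; rw [hxe] at hx; exact hhub_notin hx
      have hij : j = i := by simpa [comp] using hcompeq
      subst hij
      -- r.reverse is a closed walk with nodup support: nil
      have : r.reverse.length = 0 := by
        by_contra hne
        cases hrr : r.reverse with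
        | nil => rw [hrr] at hne; simp at hne
        | @cons _ w _ hw rr =>
          have h1 : (Sum.inl (j,0) : V3) ∈ rr.support := SimpleGraph.Walk.end_mem_support _
          have := hrnodup
          rw [hrr] at this
          simp only [SimpleGraph.Walk.support_cons, List.nodup_cons] at this
          exact this.1 h1
      have hql : q.length = 1 := by
        have : q.length = r.reverse.length + 1 := by
          rw [hqq]; simp [SimpleGraph.Walk.length_reverse]
        omega
      simp [SimpleGraph.Walk.length_cons, hql] at h3

lemma no_hub_cycle {u : V3} (c : tripleDiamond.Walk u u) (hc : c.IsCycle) :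
    hub ∉ c.support := fun hmem => no_cycle_at_hub (c.rotate hub hmem) (hc.rotate hmem)

def proj : V3 → Fin 4
  | Sum.inl (_,x) => x
  | Sum.inr _ => 0

lemma part2 : ∀ (u : V3) (c : tripleDiamond.Walk u u),
    c.IsCycle → Odd c.length → c.length = 3 := by
  intro u c hc hodd
  have hnohub := no_hub_cycle c hc
  have hall : ∀ x ∈ c.support, x ≠ hub := fun x hx he => hnohub (he ▸ hx)
  have hcomp := walk_comp c hall
  -- support.tail is nodup, injective under proj
  have htail : c.support.tail.Nodup := hc.2
  have hinj : ∀ x ∈ c.support.tail, ∀ y ∈ c.support.tail, proj x = proj y → x = y := by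
    intro x hx y hy hpxy
    have hx' : x ∈ c.support := List.mem_of_mem_tail hx
    have hy' : y ∈ c.support := List.mem_of_mem_tail hy
    have h1 : comp x = comp y := by rw [hcomp x hx', hcomp y hy']
    have hxh := hall x hx'; have hyh := hall y hy'
    rcases x with ⟨i,a⟩|w
    · rcases y with ⟨i',b⟩|w'
      · simp [comp] at h1; simp [proj] at hpxy; simp [h1, hpxy]
      · exact absurd rfl hyh
    · exact absurd rfl hxh
  have hmapnodup : (c.support.tail.map proj).Nodup := List.Nodup.map_on hinj htail
  have hlen : c.support.tail.length ≤ 4 := by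
    have := hmapnodup.length_le_card
    simpa using this
  have hlen' : c.length ≤ 4 := by
    have := SimpleGraph.Walk.length_support c
    have ht : c.support.tail.length = c.support.length - 1 := by simp
    omega
  have h3 := hc.three_le_length
  obtain ⟨k, hk⟩ := hodd
  omega

-- generic kernel/outdeg lemmas

lemma triangle_kernel {α : Type*} {A D : α → α → Prop} (hor : IsOrientation A D)
    (hKP : KernelPerfect D) {x y z : α} (hxy : A x y) (hxz : A x z) (hyz : A y z) :
    (D y x ∧ D z x) ∨ (D x y ∧ D z y) ∨ (D x z ∧ D y z) := by
  obtain ⟨S, hS, hind, habs⟩ := hKP {x, y, z}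
  have pair : ∀ a b, A a b → a ∈ S → b ∈ S → False := fun a b hab ha hb =>
    (hor.2 a b hab).elim (hind a ha b hb) (hind b hb a ha)
  by_cases hx : x ∈ S
  · have hy : y ∉ S := fun hy => pair x y hxy hx hy
    have hz : z ∉ S := fun hz => pair x z hxz hx hz
    obtain ⟨s, hsS, hDy⟩ := habs y (by simp) hy
    obtain ⟨t, htS, hDz⟩ := habs z (by simp) hz
    have hs : s = x := by
      have := hS hsS; simp at this
      rcases this with rfl|rfl|rfl
      · rfl
      · exact absurd hsS hy
      · exact absurd hsS hz
    have ht : t = x := by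
      have := hS htS; simp at this
      rcases this with rfl|rfl|rfl
      · rfl
      · exact absurd htS hy
      · exact absurd htS hz
    exact Or.inl ⟨hs ▸ hDy, ht ▸ hDz⟩
  · by_cases hy : y ∈ S
    · have hz : z ∉ S := fun hz => pair y z hyz hy hz
      obtain ⟨s, hsS, hDx⟩ := habs x (by simp) hx
      obtain ⟨t, htS, hDz⟩ := habs z (by simp) hz
      have hs : s = y := by
        have := hS hsS; simp at this
        rcases this with rfl|rfl|rfl
        · exact absurd hsS hx
        · rfl
        · exact absurd hsS hz
      have ht : t = y := by
        have := hS htS; simp at this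
        rcases this with rfl|rfl|rfl
        · exact absurd htS hx
        · rfl
        · exact absurd htS hz
      exact Or.inr (Or.inl ⟨hs ▸ hDx, ht ▸ hDz⟩)
    · by_cases hz : z ∈ S
      · obtain ⟨s, hsS, hDx⟩ := habs x (by simp) hx
        obtain ⟨t, htS, hDy⟩ := habs y (by simp) hy
        have hs : s = z := by
          have := hS hsS; simp at this
          rcases this with rfl|rfl|rfl
          · exact absurd hsS hx
          · exact absurd hsS hy
          · rfl
        have ht : t = z := by
          have := hS htS; simp at this
          rcases this with rfl|rfl|rfl
          · exact absurd htS hx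
          · exact absurd htS hy
          · rfl
        exact Or.inr (Or.inr ⟨hs ▸ hDx, ht ▸ hDy⟩)
      · obtain ⟨s, hsS, -⟩ := habs x (by simp) hx
        have := hS hsS; simp at this
        rcases this with rfl|rfl|rfl
        · exact absurd hsS hx
        · exact absurd hsS hy
        · exact absurd hsS hz

lemma out_bound {α : Type*} [Finite α] {D : α → α → Prop} {e : α}
    (h : outDeg D e + 1 ≤ 3) {x y z : α} (hxy : x ≠ y) (hxz : x ≠ z) (hyz : y ≠ z)
    (h1 : D e x) (h2 : D e y) (h3 : D e z) : False := by
  have hsub : ({x, y, z} : Set α) ⊆ {b | D e b} := by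
    rintro a (rfl|rfl|rfl) <;> assumption
  have h3c : ({x,y,z} : Set α).ncard = 3 :=
    Set.ncard_eq_three.mpr ⟨x,y,z,hxy,hxz,hyz,rfl⟩
  have hle := Set.ncard_le_ncard hsub (Set.toFinite _)
  rw [h3c] at hle
  unfold outDeg at h
  omega

-- edges of diamond i

lemma adj_inl {i : Fin 3} {x y : Fin 4} (hne : x ≠ y) (h : diamondRel x y) :
    tripleDiamond.Adj (Sum.inl (i,x)) (Sum.inl (i,y)) := by
  rw [tripleDiamond, SimpleGraph.fromRel_adj]
  exact ⟨by simp [hne], Or.inl ⟨rfl, h⟩⟩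

lemma adj_hubE (i : Fin 3) : tripleDiamond.Adj (Sum.inl (i,(0:Fin 4))) hub := by
  rw [tripleDiamond, SimpleGraph.fromRel_adj]
  exact ⟨by simp [hub], Or.inl rfl⟩

def eA (i : Fin 3) : tripleDiamond.edgeSet :=
  ⟨s(Sum.inl (i,0), Sum.inl (i,1)), adj_inl (by decide) (by decide)⟩
def eB (i : Fin 3) : tripleDiamond.edgeSet :=
  ⟨s(Sum.inl (i,0), Sum.inl (i,2)), adj_inl (by decide) (by decide)⟩
def eC (i : Fin 3) : tripleDiamond.edgeSet :=
  ⟨s(Sum.inl (i,1), Sum.inl (i,2)), adj_inl (by decide) (by decide)⟩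
def eD (i : Fin 3) : tripleDiamond.edgeSet :=
  ⟨s(Sum.inl (i,1), Sum.inl (i,3)), adj_inl (by decide) (by decide)⟩
def eE (i : Fin 3) : tripleDiamond.edgeSet :=
  ⟨s(Sum.inl (i,2), Sum.inl (i,3)), adj_inl (by decide) (by decide)⟩
def eF (i : Fin 3) : tripleDiamond.edgeSet :=
  ⟨s(Sum.inl (i,0), hub), adj_hubE i⟩

lemma neAB (i : Fin 3) : eA i ≠ eB i := by
  simp [eA, eB, Subtype.ext_iff, Sym2.eq_iff]

lemma neAC (i : Fin 3) : eA i ≠ eC i := by simp [eA, eC, Subtype.ext_iff, Sym2.eq_iff]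
lemma neAD (i : Fin 3) : eA i ≠ eD i := by simp [eA, eD, Subtype.ext_iff, Sym2.eq_iff]
lemma neAE (i : Fin 3) : eA i ≠ eE i := by simp [eA, eE, Subtype.ext_iff, Sym2.eq_iff]
lemma neBC (i : Fin 3) : eB i ≠ eC i := by simp [eB, eC, Subtype.ext_iff, Sym2.eq_iff]
lemma neBD (i : Fin 3) : eB i ≠ eD i := by simp [eB, eD, Subtype.ext_iff, Sym2.eq_iff]
lemma neBE (i : Fin 3) : eB i ≠ eE i := by simp [eB, eE, Subtype.ext_iff, Sym2.eq_iff]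
lemma neCD (i : Fin 3) : eC i ≠ eD i := by simp [eC, eD, Subtype.ext_iff, Sym2.eq_iff]
lemma neCE (i : Fin 3) : eC i ≠ eE i := by simp [eC, eE, Subtype.ext_iff, Sym2.eq_iff]
lemma neDE (i : Fin 3) : eD i ≠ eE i := by simp [eD, eE, Subtype.ext_iff, Sym2.eq_iff]
lemma neAF (i j : Fin 3) : eA i ≠ eF j := by simp [eA, eF, hub, Subtype.ext_iff, Sym2.eq_iff]
lemma neBF (i j : Fin 3) : eB i ≠ eF j := by simp [eB, eF, hub, Subtype.ext_iff, Sym2.eq_iff]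
lemma neCF (i j : Fin 3) : eC i ≠ eF j := by simp [eC, eF, hub, Subtype.ext_iff, Sym2.eq_iff]
lemma neDF (i j : Fin 3) : eD i ≠ eF j := by simp [eD, eF, hub, Subtype.ext_iff, Sym2.eq_iff]
lemma neEF (i j : Fin 3) : eE i ≠ eF j := by simp [eE, eF, hub, Subtype.ext_iff, Sym2.eq_iff]
lemma neFF {i j : Fin 3} (h : i ≠ j) : eF i ≠ eF j := by
  simpa [eF, hub, Subtype.ext_iff, Sym2.eq_iff, Prod.ext_iff] using h

lemma laAB (i : Fin 3) : lineAdj tripleDiamond (eA i) (eB i) :=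
  ⟨neAB i, Sum.inl (i,0), by simp [eA], by simp [eB]⟩
lemma laAC (i : Fin 3) : lineAdj tripleDiamond (eA i) (eC i) :=
  ⟨neAC i, Sum.inl (i,1), by simp [eA], by simp [eC]⟩
lemma laAD (i : Fin 3) : lineAdj tripleDiamond (eA i) (eD i) :=
  ⟨neAD i, Sum.inl (i,1), by simp [eA], by simp [eD]⟩
lemma laBC (i : Fin 3) : lineAdj tripleDiamond (eB i) (eC i) :=
  ⟨neBC i, Sum.inl (i,2), by simp [eB], by simp [eC]⟩
lemma laBE (i : Fin 3) : lineAdj tripleDiamond (eB i) (eE i) :=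
  ⟨neBE i, Sum.inl (i,2), by simp [eB], by simp [eE]⟩
lemma laCD (i : Fin 3) : lineAdj tripleDiamond (eC i) (eD i) :=
  ⟨neCD i, Sum.inl (i,1), by simp [eC], by simp [eD]⟩
lemma laCE (i : Fin 3) : lineAdj tripleDiamond (eC i) (eE i) :=
  ⟨neCE i, Sum.inl (i,2), by simp [eC], by simp [eE]⟩
lemma laDE (i : Fin 3) : lineAdj tripleDiamond (eD i) (eE i) :=
  ⟨neDE i, Sum.inl (i,3), by simp [eD], by simp [eE]⟩
lemma laAF (i : Fin 3) : lineAdj tripleDiamond (eA i) (eF i) :=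
  ⟨neAF i i, Sum.inl (i,0), by simp [eA], by simp [eF]⟩
lemma laBF (i : Fin 3) : lineAdj tripleDiamond (eB i) (eF i) :=
  ⟨neBF i i, Sum.inl (i,0), by simp [eB], by simp [eF]⟩
lemma laFF {i j : Fin 3} (h : i ≠ j) : lineAdj tripleDiamond (eF i) (eF j) :=
  ⟨neFF h, hub, by simp [eF], by simp [eF]⟩

set_option maxRecDepth 100000 in
set_option synthInstance.maxHeartbeats 1000000 in
set_option synthInstance.maxSize 2000 in
set_option maxHeartbeats 2000000 in
lemma boolKey : ∀ ab ba ac ca ad da bc cb be eb cd dc ce ec de ed : Bool,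
  (ab = true ∨ ba = true) → (ac = true ∨ ca = true) → (ad = true ∨ da = true) →
  (bc = true ∨ cb = true) → (be = true ∨ eb = true) → (cd = true ∨ dc = true) →
  (ce = true ∨ ec = true) → (de = true ∨ ed = true) →
  ¬(ab = true ∧ ac = true) → ¬(ab = true ∧ ad = true) → ¬(ac = true ∧ ad = true) →
  ¬(ba = true ∧ bc = true) → ¬(ba = true ∧ be = true) → ¬(bc = true ∧ be = true) →
  ¬(ca = true ∧ cb = true ∧ cd = true) → ¬(ca = true ∧ cb = true ∧ ce = true) →
  ¬(ca = true ∧ cd = true ∧ ce = true) → ¬(cb = true ∧ cd = true ∧ ce = true) →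
  ¬(da = true ∧ dc = true ∧ de = true) → ¬(eb = true ∧ ec = true ∧ ed = true) →
  ((ca = true ∧ da = true) ∨ (ac = true ∧ dc = true) ∨ (ad = true ∧ cd = true)) →
  ((cb = true ∧ eb = true) ∨ (bc = true ∧ ec = true) ∨ (be = true ∧ ce = true)) →
  ((ba = true ∧ ca = true) ∨ (ab = true ∧ cb = true) ∨ (ac = true ∧ bc = true)) →
  ((dc = true ∧ ec = true) ∨ (cd = true ∧ ed = true) ∨ (ce = true ∧ de = true)) →
  False := by decide

section Main
variable {D : tripleDiamond.edgeSet → tripleDiamond.edgeSet → Prop}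

lemma invI (hor : IsOrientation (lineAdj tripleDiamond) D) (hKP : KernelPerfect D)
    (hout : ∀ e, outDeg D e + 1 ≤ 3) (i : Fin 3) :
    D (eF i) (eA i) ∨ D (eF i) (eB i) := by
  classical
  by_contra hcon
  push_neg at hcon
  have haf : D (eA i) (eF i) := (hor.2 _ _ (laAF i)).resolve_right hcon.1
  have hbf : D (eB i) (eF i) := (hor.2 _ _ (laBF i)).resolve_right hcon.2
  have ob : ∀ (e x y z : tripleDiamond.edgeSet), x ≠ y → x ≠ z → y ≠ z →
      D e x → D e y → D e z → False := fun e x y z h1 h2 h3 d1 d2 d3 =>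
    out_bound (hout e) h1 h2 h3 d1 d2 d3
  have dd : ∀ {p : Prop}, p → ∀ [Decidable p], decide p = true := fun hp _ => decide_eq_true hp
  have imp2 : ∀ {p q : Prop} [Decidable p] [Decidable q],
      (p ∧ q) → (decide p = true ∧ decide q = true) :=
    fun h => ⟨decide_eq_true h.1, decide_eq_true h.2⟩
  refine boolKey (decide (D (eA i) (eB i))) (decide (D (eB i) (eA i)))
    (decide (D (eA i) (eC i))) (decide (D (eC i) (eA i)))
    (decide (D (eA i) (eD i))) (decide (D (eD i) (eA i)))
    (decide (D (eB i) (eC i))) (decide (D (eC i) (eB i)))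
    (decide (D (eB i) (eE i))) (decide (D (eE i) (eB i)))
    (decide (D (eC i) (eD i))) (decide (D (eD i) (eC i)))
    (decide (D (eC i) (eE i))) (decide (D (eE i) (eC i)))
    (decide (D (eD i) (eE i))) (decide (D (eE i) (eD i)))
    ((hor.2 _ _ (laAB i)).imp decide_eq_true decide_eq_true)
    ((hor.2 _ _ (laAC i)).imp decide_eq_true decide_eq_true)
    ((hor.2 _ _ (laAD i)).imp decide_eq_true decide_eq_true)
    ((hor.2 _ _ (laBC i)).imp decide_eq_true decide_eq_true)
    ((hor.2 _ _ (laBE i)).imp decide_eq_true decide_eq_true)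
    ((hor.2 _ _ (laCD i)).imp decide_eq_true decide_eq_true)
    ((hor.2 _ _ (laCE i)).imp decide_eq_true decide_eq_true)
    ((hor.2 _ _ (laDE i)).imp decide_eq_true decide_eq_true)
    -- outdeg at a : arcs to f, plus pairs among b,c,d
    (fun ⟨u,v⟩ => ob (eA i) (eF i) (eB i) (eC i) (neBF i i).symm (neCF i i).symm (neBC i)
      haf (of_decide_eq_true u) (of_decide_eq_true v))
    (fun ⟨u,v⟩ => ob (eA i) (eF i) (eB i) (eD i) (neBF i i).symm (neDF i i).symm (neBD i)
      haf (of_decide_eq_true u) (of_decide_eq_true v))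
    (fun ⟨u,v⟩ => ob (eA i) (eF i) (eC i) (eD i) (neCF i i).symm (neDF i i).symm (neCD i)
      haf (of_decide_eq_true u) (of_decide_eq_true v))
    -- outdeg at b : arcs to f, plus pairs among a,c,e
    (fun ⟨u,v⟩ => ob (eB i) (eF i) (eA i) (eC i) (neAF i i).symm (neCF i i).symm (neAC i)
      hbf (of_decide_eq_true u) (of_decide_eq_true v))
    (fun ⟨u,v⟩ => ob (eB i) (eF i) (eA i) (eE i) (neAF i i).symm (neEF i i).symm (neAE i)
      hbf (of_decide_eq_true u) (of_decide_eq_true v))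
    (fun ⟨u,v⟩ => ob (eB i) (eF i) (eC i) (eE i) (neCF i i).symm (neEF i i).symm (neCE i)
      hbf (of_decide_eq_true u) (of_decide_eq_true v))
    -- outdeg at c : triples among a,b,d,e
    (fun ⟨u,v,w⟩ => ob (eC i) (eA i) (eB i) (eD i) (neAB i) (neAD i) (neBD i)
      (of_decide_eq_true u) (of_decide_eq_true v) (of_decide_eq_true w))
    (fun ⟨u,v,w⟩ => ob (eC i) (eA i) (eB i) (eE i) (neAB i) (neAE i) (neBE i)
      (of_decide_eq_true u) (of_decide_eq_true v) (of_decide_eq_true w))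
    (fun ⟨u,v,w⟩ => ob (eC i) (eA i) (eD i) (eE i) (neAD i) (neAE i) (neDE i)
      (of_decide_eq_true u) (of_decide_eq_true v) (of_decide_eq_true w))
    (fun ⟨u,v,w⟩ => ob (eC i) (eB i) (eD i) (eE i) (neBD i) (neBE i) (neDE i)
      (of_decide_eq_true u) (of_decide_eq_true v) (of_decide_eq_true w))
    -- outdeg at d : a,c,e
    (fun ⟨u,v,w⟩ => ob (eD i) (eA i) (eC i) (eE i) (neAC i) (neAE i) (neCE i)
      (of_decide_eq_true u) (of_decide_eq_true v) (of_decide_eq_true w))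
    -- outdeg at e : b,c,d
    (fun ⟨u,v,w⟩ => ob (eE i) (eB i) (eC i) (eD i) (neBC i) (neBD i) (neCD i)
      (of_decide_eq_true u) (of_decide_eq_true v) (of_decide_eq_true w))
    -- cliques
    ((triangle_kernel hor hKP (laAC i) (laAD i) (laCD i)).imp imp2 (Or.imp imp2 imp2))
    ((triangle_kernel hor hKP (laBC i) (laBE i) (laCE i)).imp imp2 (Or.imp imp2 imp2))
    ((triangle_kernel hor hKP (laAB i) (laAC i) (laBC i)).imp imp2 (Or.imp imp2 imp2))
    ((triangle_kernel hor hKP (laCD i) (laCE i) (laDE i)).imp imp2 (Or.imp imp2 imp2))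

lemma hubMain (hor : IsOrientation (lineAdj tripleDiamond) D) (hKP : KernelPerfect D)
    (hout : ∀ e, outDeg D e + 1 ≤ 3) (i j k : Fin 3)
    (hij : i ≠ j) (hik : i ≠ k) (hjk : j ≠ k)
    (h1 : D (eF i) (eF j)) (h2 : D (eF k) (eF j)) : False := by
  rcases hor.2 _ _ (laFF hik) with hik'|hki'
  · rcases invI hor hKP hout i with hx|hx
    · exact out_bound (hout (eF i)) (neAF i j) (neAF i k) (neFF hjk) hx h1 hik'
    · exact out_bound (hout (eF i)) (neBF i j) (neBF i k) (neFF hjk) hx h1 hik'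
  · rcases invI hor hKP hout k with hx|hx
    · exact out_bound (hout (eF k)) (neAF k j) (neAF k i) (neFF (Ne.symm hij)) hx h2 hki'
    · exact out_bound (hout (eF k)) (neBF k j) (neBF k i) (neFF (Ne.symm hij)) hx h2 hki'

lemma part3 : ¬ ∃ D : tripleDiamond.edgeSet → tripleDiamond.edgeSet → Prop,
    IsOrientation (lineAdj tripleDiamond) D ∧ KernelPerfect D ∧
    ∀ e, outDeg D e + 1 ≤ 3 := by
  rintro ⟨D, hor, hKP, hout⟩
  have tri := triangle_kernel hor hKP (laFF (show (0:Fin 3) ≠ 1 by decide))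
    (laFF (show (0:Fin 3) ≠ 2 by decide)) (laFF (show (1:Fin 3) ≠ 2 by decide))
  rcases tri with ⟨u1,u2⟩|⟨u1,u2⟩|⟨u1,u2⟩
  · exact hubMain hor hKP hout 1 0 2 (by decide) (by decide) (by decide) u1 u2
  · exact hubMain hor hKP hout 0 1 2 (by decide) (by decide) (by decide) u1 u2
  · exact hubMain hor hKP hout 0 2 1 (by decide) (by decide) (by decide) u1 u2

end Main


/-- the triple-diamond graph is subcubic, lies in `G¹`
(all odd cycles are triangles), and `L(G)` has no kernel-perfect orientation
with all out-degrees at most 2, i.e. `G` is not 3-edge-orientable. -/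
theorem stmt16 :
    (∀ v, deg tripleDiamond v ≤ 3) ∧
    (∀ (u : Fin 3 × Fin 4 ⊕ Unit) (c : tripleDiamond.Walk u u),
      c.IsCycle → Odd c.length → c.length = 3) ∧
    ¬ ∃ D : tripleDiamond.edgeSet → tripleDiamond.edgeSet → Prop,
      IsOrientation (lineAdj tripleDiamond) D ∧ KernelPerfect D ∧
      ∀ e, outDeg D e + 1 ≤ 3 :=
  ⟨part1, part2, part3⟩
end

section
/- Let G ∈ G* be 2-connected, let C be a longest odd cycle of G with |C| ≥ 5, and let {x₁,x₂} be the common touching set of all vertices outside C. Then every connected component H of G − V(C) is a path whose one endpoint is the unique neighbor of x₁ in H, whose other endpoint is the unique neighbor of x₂ in H, and whose internal vertices have no neighbors outside the path. -/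
open SimpleGraph

section Stmt19Helpers

namespace Stmt19

variable {V : Type*} {G : SimpleGraph V}

/-- A path from `u` to `v` containing the edge `s(u,v)` has length 1. -/
lemma length_eq_one_of_edge_ends : ∀ {u v : V} {p : G.Walk u v}, p.IsPath →
    s(u, v) ∈ p.edges → p.length = 1 := by
  intro u v p hp h
  induction p with
  | nil => simp at h
  | @cons a b c hadj q ih =>
    rw [Walk.edges_cons, List.mem_cons] at h
    rw [Walk.cons_isPath_iff] at hp
    rcases h with h | h
    · rw [Sym2.eq_iff] at h
      rcases h with ⟨-, rfl⟩ | ⟨h1, h2⟩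
      · have : q = Walk.nil := (Walk.isPath_iff_eq_nil).mp hp.1
        subst this; simp
      · exact absurd h1 hadj.ne
    · exact absurd (q.fst_mem_support_of_mem_edges h) hp.2

/-- Decompose a nonnil walk as `q.concat h`. -/
lemma exists_concat {u v : V} (p : G.Walk u v) (hne : u ≠ v) :
    ∃ (x : V) (q : G.Walk u x) (h : G.Adj x v), p = q.concat h := by
  have hnn : ¬ p.reverse.Nil := by
    rw [Walk.not_nil_iff_lt_length, Walk.length_reverse]
    rcases Nat.eq_zero_or_pos p.length with h0 | h0
    · exact absurd (by
        have := Walk.nil_iff_support_eq.mp (Walk.nil_iff_length_eq.mpr h0)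
        have hv : v ∈ p.support := Walk.end_mem_support p
        rw [this] at hv; exact (List.mem_singleton.mp hv).symm) hne
    · exact h0
  obtain ⟨x, hadj, q, heq⟩ := Walk.not_nil_iff.mp hnn
  refine ⟨x, q.reverse, hadj.symm, ?_⟩
  conv_lhs => rw [← Walk.reverse_reverse p, heq]
  rw [Walk.reverse_cons]
  rfl

/-- Prefix of a walk up to the first vertex satisfying `P`. -/
lemma exists_prefix_until {u v : V} (p : G.Walk u v) (P : V → Prop) (hv : P v) :
    ∃ (t : V) (q : G.Walk u t), P t ∧ (∀ x ∈ q.support, P x → x = t) ∧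
      (∀ x ∈ q.support, x ∈ p.support) ∧ (p.IsPath → q.IsPath) ∧
      q.edges ⊆ p.edges := by
  classical
  induction p with
  | nil => exact ⟨_, Walk.nil, hv, by simp, by simp, fun h => h, by simp⟩
  | @cons a b c hadj q ih =>
    by_cases ha : P a
    · exact ⟨a, Walk.nil, ha, by simp, by simp, fun _ => Walk.IsPath.nil, by simp⟩
    · obtain ⟨t, r, hPt, hfirst, hsub, hpath, hedge⟩ := ih hv
      refine ⟨t, Walk.cons hadj r, hPt, ?_, ?_, ?_, ?_⟩
      · intro x hx hPx
        rw [Walk.support_cons, List.mem_cons] at hx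
        rcases hx with rfl | hx
        · exact absurd hPx ha
        · exact hfirst x hx hPx
      · intro x hx
        rw [Walk.support_cons, List.mem_cons] at hx ⊢
        rcases hx with rfl | hx
        · exact Or.inl rfl
        · exact Or.inr (hsub x hx)
      · intro hp
        rw [Walk.cons_isPath_iff] at hp ⊢
        exact ⟨hpath hp.1, fun hmem => hp.2 (hsub a hmem)⟩
      · intro e he
        rw [Walk.edges_cons, List.mem_cons] at he ⊢
        rcases he with rfl | he
        · exact Or.inl rfl
        · exact Or.inr (hedge he)

/-- Glue two paths sharing only the common endpoint. -/
lemma append_isPath {u v w : V} {p : G.Walk u v} {q : G.Walk v w}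
    (hp : p.IsPath) (hq : q.IsPath)
    (h : ∀ x ∈ p.support, x ∈ q.support → x = v) : (p.append q).IsPath := by
  have hqt : q.support.tail.Nodup := by
    have := hq.support_nodup
    rw [Walk.support_eq_cons] at this
    exact this.of_cons
  have hvq : v ∉ q.support.tail := by
    have := hq.support_nodup
    rw [Walk.support_eq_cons, List.nodup_cons] at this
    exact this.1
  rw [Walk.isPath_def, Walk.support_append, List.nodup_append]
  refine ⟨hp.support_nodup, hqt, ?_⟩
  intro x hx y hx' hxy
  subst hxy
  have : x = v := h x hx (List.mem_of_mem_tail hx')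
  subst this
  exact hvq hx'



variable {V : Type*} {G : SimpleGraph V}


lemma two_paths_append_isCycle {u v : V} {p : G.Walk u v} {q : G.Walk v u}
    (hp : p.IsPath) (hq : q.IsPath) (hne : u ≠ v)
    (hshare : ∀ x ∈ p.support, x ∈ q.support → x = u ∨ x = v)
    (hlen : ¬ (p.length = 1 ∧ q.length = 1)) : (p.append q).IsCycle := by
  have hdisj : ∀ e ∈ p.edges, e ∈ q.edges → False := by
    intro e hep heq
    induction e with
    | h y z =>
      have hyz : y ≠ z := (p.adj_of_mem_edges hep).ne
      have hy : y = u ∨ y = v :=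
        hshare y (p.fst_mem_support_of_mem_edges hep) (q.fst_mem_support_of_mem_edges heq)
      have hz : z = u ∨ z = v :=
        hshare z (p.snd_mem_support_of_mem_edges hep) (q.snd_mem_support_of_mem_edges heq)
      have he : s(y, z) = s(u, v) := by
        rcases hy with rfl | rfl
        · rcases hz with rfl | rfl
          · exact absurd rfl hyz
          · rfl
        · rcases hz with rfl | rfl
          · exact Sym2.eq_swap
          · exact absurd rfl hyz
      rw [he] at hep heq
      exact hlen ⟨length_eq_one_of_edge_ends hp hep,
        length_eq_one_of_edge_ends hq (by rwa [Sym2.eq_swap] at heq)⟩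
  have hppos : 0 < p.length := by
    rcases Nat.eq_zero_or_pos p.length with h0 | h0
    · exfalso
      have := Walk.nil_iff_support_eq.mp (Walk.nil_iff_length_eq.mpr h0)
      have hv : v ∈ p.support := Walk.end_mem_support p
      rw [this] at hv
      exact hne (List.mem_singleton.mp hv).symm
    · exact h0
  constructor
  · constructor
    · rw [Walk.isTrail_def, Walk.edges_append, List.nodup_append]
      exact ⟨hp.isTrail.edges_nodup, hq.isTrail.edges_nodup, fun e he e' he' hee => hdisj e he (by rw [hee]; exact he')⟩
    · intro hnil
      have := congrArg Walk.length hnil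
      rw [Walk.length_append] at this
      simp at this
      exact absurd this.1 (by rw [Walk.nil_iff_length_eq]; omega)
  · have hpt : p.support.tail.Nodup := by
      have := hp.support_nodup; rw [Walk.support_eq_cons] at this; exact this.of_cons
    have hqt : q.support.tail.Nodup := by
      have := hq.support_nodup; rw [Walk.support_eq_cons] at this; exact this.of_cons
    have hup : u ∉ p.support.tail := by
      have := hp.support_nodup; rw [Walk.support_eq_cons, List.nodup_cons] at this; exact this.1
    have hvq : v ∉ q.support.tail := by
      have := hq.support_nodup; rw [Walk.support_eq_cons, List.nodup_cons] at this; exact this.1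
    have hsup : (p.append q).support.tail = p.support.tail ++ q.support.tail := by
      rw [Walk.support_append]
      conv_lhs => rw [Walk.support_eq_cons]
      simp
    rw [hsup, List.nodup_append]
    refine ⟨hpt, hqt, ?_⟩
    intro x hx y hx' hxy
    subst hxy
    rcases hshare x (List.mem_of_mem_tail hx) (List.mem_of_mem_tail hx') with rfl | rfl
    · exact hup hx
    · exact hvq hx'

lemma gstar_contra (hG : InGStar G) {u w : V} {Z₁ : G.Walk u u} {Z₂ : G.Walk w w}
    (h₁ : Z₁.IsCycle) (h₂ : Z₂.IsCycle) (ho₁ : Odd Z₁.length) (ho₂ : Odd Z₂.length)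
    {e₁ e₂ e₀ : Sym2 V} (hne : e₁ ≠ e₂)
    (h₁₁ : e₁ ∈ Z₁.edges) (h₁₂ : e₁ ∈ Z₂.edges) (h₂₁ : e₂ ∈ Z₁.edges) (h₂₂ : e₂ ∈ Z₂.edges)
    (h₀₁ : e₀ ∈ Z₁.edges) (h₀₂ : e₀ ∉ Z₂.edges) : False := by
  have hsetne : {e | e ∈ Z₁.edges} ≠ {e | e ∈ Z₂.edges} := by
    intro h
    exact h₀₂ (h ▸ h₀₁ : e₀ ∈ {e | e ∈ Z₂.edges})
  have hcard := hG u w Z₁ Z₂ h₁ h₂ ho₁ ho₂ hsetne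
  have hsub : ({e₁, e₂} : Set (Sym2 V)) ⊆ {e | e ∈ Z₁.edges} ∩ {e | e ∈ Z₂.edges} := by
    intro x hx
    rcases hx with rfl | hx
    · exact ⟨h₁₁, h₁₂⟩
    · rw [Set.mem_singleton_iff] at hx; subst hx; exact ⟨h₂₁, h₂₂⟩
  have hfin : ({e | e ∈ Z₁.edges} ∩ {e | e ∈ Z₂.edges}).Finite :=
    (Z₁.edges.finite_toSet).subset Set.inter_subset_left
  have h2le : 2 ≤ ({e | e ∈ Z₁.edges} ∩ {e | e ∈ Z₂.edges}).ncard := by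
    have := Set.ncard_le_ncard hsub hfin
    rwa [Set.ncard_pair hne] at this
  omega

lemma walk_down {S : Set V} {a b : S} (w : (G.induce S).Walk a b) :
    ∃ w' : G.Walk a.1 b.1, w'.support = w.support.map Subtype.val := by
  induction w with
  | nil => exact ⟨.nil, by simp⟩
  | @cons x y z h p ih =>
    obtain ⟨w', h1⟩ := ih
    exact ⟨.cons (comap_adj.mp h) w', by simp [h1]⟩

lemma walk_up {S : Set V} : ∀ {a b : V} (p : G.Walk a b)
    (hs : ∀ x ∈ p.support, x ∈ S) (ha : a ∈ S) (hb : b ∈ S),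
    ∃ w : (G.induce S).Walk ⟨a, ha⟩ ⟨b, hb⟩,
      w.support.map Subtype.val = p.support := by
  intro a b p
  induction p with
  | nil => intro hs ha hb; exact ⟨.nil, by simp⟩
  | @cons x y z h p ih =>
    intro hs ha hb
    have hy : ∀ u ∈ p.support, u ∈ S := fun u hu => hs u (by simp [hu])
    obtain ⟨w, hw⟩ := ih hy (hy y p.start_mem_support) hb
    refine ⟨.cons (by simp only [SimpleGraph.comap_adj, Function.Embedding.coe_subtype]; exact h) w, by simp [hw]⟩

lemma reachable_of_mem_support {a b x : V} (p : G.Walk a b) (hx : x ∈ p.support) :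
    G.Reachable a x := by
  classical
  exact ⟨p.takeUntil x hx⟩



variable {V : Type*} {G : SimpleGraph V}

lemma length_pos_of_ne {a b : V} (p : G.Walk a b) (h : a ≠ b) : 0 < p.length := by
  rcases Nat.eq_zero_or_pos p.length with h0 | h0
  · exfalso
    have := Walk.nil_iff_support_eq.mp (Walk.nil_iff_length_eq.mpr h0)
    have hv : b ∈ p.support := Walk.end_mem_support p
    rw [this] at hv
    exact h (List.mem_singleton.mp hv).symm
  · exact h0

lemma end_mem_tail_support {a b : V} (p : G.Walk a b) (hp : ¬ p.Nil) :
    b ∈ p.support.tail := by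
  cases p with
  | nil => exact absurd Walk.Nil.nil hp
  | cons h q => simpa using q.end_mem_support

lemma mem_support_iff_mem_tail {a x : V} (p : G.Walk a a) (hp : ¬ p.Nil) :
    x ∈ p.support ↔ x ∈ p.support.tail := by
  constructor
  · intro h
    rcases (Walk.mem_support_iff p).mp h with rfl | h
    · exact end_mem_tail_support p hp
    · exact h
  · intro h
    rw [Walk.support_eq_cons]
    exact List.mem_cons_of_mem _ h

lemma length_rotate {a b : V} [DecidableEq V] (c : G.Walk a a) (h : b ∈ c.support) :
    (c.rotate b h).length = c.length := by
  have := (Walk.rotate_darts c b h).perm.length_eq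
  rwa [Walk.length_darts, Walk.length_darts] at this

lemma edge_of_length_one {a b : V} (p : G.Walk a b) (h : p.length = 1) :
    ∃ hadj : G.Adj a b, s(a, b) ∈ p.edges := by
  cases p with
  | nil => simp at h
  | @cons a y b hadj q =>
    have h0 : q.length = 0 := by simpa using h
    have : y = b := by
      have := Walk.nil_iff_support_eq.mp (Walk.nil_iff_length_eq.mpr h0)
      have hv : b ∈ q.support := Walk.end_mem_support q
      rw [this] at hv
      exact (List.mem_singleton.mp hv).symm
    subst this
    exact ⟨hadj, by simp⟩

lemma two_distinct_edges {a b : V} (p : G.Walk a b) (hp : p.IsPath) (h : 2 ≤ p.length) :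
    ∃ e₁ e₂ : Sym2 V, e₁ ≠ e₂ ∧ e₁ ∈ p.edges ∧ e₂ ∈ p.edges := by
  have hnd : p.edges.Nodup := hp.isTrail.edges_nodup
  have hlen : 2 ≤ p.edges.length := by rw [Walk.length_edges]; exact h
  match hl : p.edges with
  | [] => rw [hl] at hlen; simp at hlen
  | [e] => rw [hl] at hlen; simp at hlen
  | e₁ :: e₂ :: t =>
    rw [hl] at hnd
    refine ⟨e₁, e₂, ?_, by simp, by simp⟩
    intro hcontra
    rw [List.nodup_cons] at hnd
    exact hnd.1 (hcontra ▸ (List.mem_cons_self : e₂ ∈ e₂ :: t))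

/-- Splitting a cycle at a second vertex into two arcs. -/
lemma cycle_split {x₁ x₂ : V} {c₀ : G.Walk x₁ x₁} (hc : c₀.IsCycle)
    (h2 : x₂ ∈ c₀.support) (hne : x₁ ≠ x₂) :
    ∃ (A : G.Walk x₁ x₂) (B : G.Walk x₂ x₁),
      A.IsPath ∧ B.IsPath ∧ A.length + B.length = c₀.length ∧
      (∀ x ∈ A.support, x ∈ c₀.support) ∧ (∀ x ∈ B.support, x ∈ c₀.support) ∧
      A.edges ⊆ c₀.edges ∧ B.edges ⊆ c₀.edges ∧ 1 ≤ A.length ∧ 1 ≤ B.length := by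
  classical
  have hnn : ¬ c₀.Nil := fun h => hc.ne_nil h.eq_nil
  set A := c₀.takeUntil x₂ h2 with hA_def
  set B := c₀.dropUntil x₂ h2 with hB_def
  have hsup : c₀.support = A.support ++ B.support.tail := by
    conv_lhs => rw [← c₀.take_spec h2]
    rw [Walk.support_append]
  have htail : c₀.support.tail = A.support.tail ++ B.support.tail := by
    rw [hsup]
    conv_lhs => rw [Walk.support_eq_cons A]
    rfl
  have hnd := hc.support_nodup
  rw [htail, List.nodup_append] at hnd
  obtain ⟨hAnd, hBnd, hdisj⟩ := hnd
  have hx1B : x₁ ∈ B.support.tail :=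
    end_mem_tail_support B (by rw [Walk.not_nil_iff_lt_length]; exact length_pos_of_ne B hne.symm)
  have hx2A : x₂ ∈ A.support.tail :=
    end_mem_tail_support A (by rw [Walk.not_nil_iff_lt_length]; exact length_pos_of_ne A hne)
  refine ⟨A, B, ?_, ?_, ?_, ?_, ?_, ?_, ?_, ?_, ?_⟩
  · rw [Walk.isPath_def, Walk.support_eq_cons A, List.nodup_cons]
    exact ⟨fun hmem => hdisj _ hmem _ hx1B rfl, hAnd⟩
  · rw [Walk.isPath_def, Walk.support_eq_cons B, List.nodup_cons]
    exact ⟨fun hmem => hdisj _ hx2A _ hmem rfl, hBnd⟩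
  · have := congrArg Walk.length (c₀.take_spec h2)
    rwa [Walk.length_append] at this
  · exact fun x hx => c₀.support_takeUntil_subset h2 hx
  · exact fun x hx => c₀.support_dropUntil_subset h2 hx
  · exact c₀.edges_takeUntil_subset h2
  · exact c₀.edges_dropUntil_subset h2
  · exact length_pos_of_ne _ hne
  · exact length_pos_of_ne _ hne.symm


lemma isPath_concat {a b d : V} {p : G.Walk a b} (hp : p.IsPath) (h : G.Adj b d)
    (hd : d ∉ p.support) : (p.concat h).IsPath := by
  rw [Walk.concat]
  refine append_isPath hp ?_ ?_
  · rw [Walk.cons_isPath_iff]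
    exact ⟨Walk.IsPath.nil, by simpa using h.ne⟩
  · intro x hx hx'
    simp only [Walk.support_cons, Walk.support_nil, List.mem_cons] at hx'
    rcases hx' with rfl | hx'
    · rfl
    · have hxd : x = d := by simpa using hx'
      exact absurd (hxd ▸ hx) hd

lemma take_drop_inter [DecidableEq V] {a b t x : V} {p : G.Walk a b} (hp : p.IsPath)
    (ht : t ∈ p.support) (hx1 : x ∈ (p.takeUntil t ht).support)
    (hx2 : x ∈ (p.dropUntil t ht).support) : x = t := by
  have hnd := hp.support_nodup
  have hsplit : p.support = (p.takeUntil t ht).support ++ (p.dropUntil t ht).support.tail := by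
    conv_lhs => rw [← p.take_spec ht]
    rw [Walk.support_append]
  rcases ((Walk.mem_support_iff _).mp hx2) with rfl | hx2'
  · rfl
  · rw [hsplit, List.nodup_append] at hnd
    exact absurd hx2' (fun h => hnd.2.2 _ hx1 _ h rfl)

lemma exists_edge {a b : V} (p : G.Walk a b) (h : 0 < p.length) : ∃ e, e ∈ p.edges := by
  have hne : p.edges ≠ [] := by
    intro hnil
    have := p.length_edges
    rw [hnil] at this
    simp at this
    omega
  obtain ⟨e, t, het⟩ := List.exists_cons_of_ne_nil hne
  exact ⟨e, by rw [het]; simp⟩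

section Context

variable {V : Type*} {G : SimpleGraph V} {u x₁ x₂ : V} {c : G.Walk u u}

lemma arc_exists [DecidableEq V] (hG : InGStar G) (hc : c.IsCycle)
    (hodd : Odd c.length)
    (hx : x₁ ≠ x₂) (h1 : x₁ ∈ c.support) (h2 : x₂ ∈ c.support)
    {Q : G.Walk x₁ x₂} (hQ : Q.IsPath) (hQlen : 2 ≤ Q.length)
    (hQint : ∀ x ∈ Q.support, x ≠ x₁ → x ≠ x₂ → x ∉ c.support) :
    G.Adj x₁ x₂ ∧ s(x₁, x₂) ∈ c.edges ∧
    ∃ R : G.Walk x₂ x₁, R.IsPath ∧ (∀ x ∈ R.support, x ∈ c.support) ∧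
      1 + R.length = c.length := by
  have hnnc : ¬ c.Nil := fun h => hc.ne_nil h.eq_nil
  have hcpos : 0 < c.length := Walk.not_nil_iff_lt_length.mp hnnc
  have hnn₁ : ¬ (c.rotate x₁ h1).Nil := by
    rw [Walk.not_nil_iff_lt_length, length_rotate]; exact hcpos
  have hmem : ∀ x, x ∈ (c.rotate x₁ h1).support ↔ x ∈ c.support := by
    intro x
    rw [mem_support_iff_mem_tail _ hnn₁, mem_support_iff_mem_tail c hnnc,
      (Walk.support_rotate c x₁ h1).mem_iff]
  have hedge : ∀ e, e ∈ (c.rotate x₁ h1).edges ↔ e ∈ c.edges :=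
    fun e => (Walk.rotate_edges c x₁ h1).mem_iff
  obtain ⟨A, B, hA, hB, hAB, hAsup, hBsup, hAe, hBe, hA1, hB1⟩ :=
    cycle_split (hc.rotate h1) ((hmem x₂).mpr h2) hx
  have hlenrot : A.length + B.length = c.length := by rwa [length_rotate] at hAB
  -- the edge e₀ of Q not on c
  have hQnn : ¬ Q.Nil := by rw [Walk.not_nil_iff_lt_length]; omega
  obtain ⟨y, hadjy, q, hQeq⟩ := Walk.not_nil_iff.mp hQnn
  have hyQ : y ∈ Q.support := by rw [hQeq]; simp
  have hyx₁ : y ≠ x₁ := by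
    intro h
    have := hQ
    rw [hQeq, Walk.cons_isPath_iff] at this
    exact this.2 (h ▸ q.start_mem_support)
  have hyx₂ : y ≠ x₂ := by
    intro h
    subst h
    have hqp : q.IsPath := by
      have := hQ; rw [hQeq, Walk.cons_isPath_iff] at this; exact this.1
    have : q = Walk.nil := (Walk.isPath_iff_eq_nil).mp hqp
    rw [hQeq, this] at hQlen
    simp at hQlen
  have hyc : y ∉ c.support := hQint y hyQ hyx₁ hyx₂
  have he₀Q : s(x₁, y) ∈ Q.edges := by rw [hQeq]; simp
  have he₀c : s(x₁, y) ∉ c.edges := fun hmm => hyc (c.snd_mem_support_of_mem_edges hmm)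
  -- share conditions
  have hshareA : ∀ x ∈ Q.support, x ∈ A.reverse.support → x = x₁ ∨ x = x₂ := by
    intro x hxQ hxA
    by_cases e1 : x = x₁
    · exact Or.inl e1
    by_cases e2 : x = x₂
    · exact Or.inr e2
    exact absurd ((hmem x).mp (hAsup x (by rwa [Walk.support_reverse, List.mem_reverse] at hxA)))
      (hQint x hxQ e1 e2)
  have hshareB : ∀ x ∈ Q.support, x ∈ B.support → x = x₁ ∨ x = x₂ := by
    intro x hxQ hxB
    by_cases e1 : x = x₁
    · exact Or.inl e1
    by_cases e2 : x = x₂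
    · exact Or.inr e2
    exact absurd ((hmem x).mp (hBsup x hxB)) (hQint x hxQ e1 e2)
  have hoddor : Odd (Q.length + A.length) ∨ Odd (Q.length + B.length) := by
    rw [Nat.odd_iff] at hodd ⊢
    rw [Nat.odd_iff]
    omega
  rcases hoddor with hoddZ | hoddZ
  · -- Z_A is the odd cycle; conclude A.length = 1
    have hZA : (Q.append A.reverse).IsCycle :=
      two_paths_append_isCycle hQ hA.reverse hx hshareA (by omega)
    have hZAlen : (Q.append A.reverse).length = Q.length + A.length := by
      rw [Walk.length_append, Walk.length_reverse]
    have hA1' : A.length = 1 := by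
      by_contra hne1
      have h2A : 2 ≤ A.length := by omega
      obtain ⟨e₁, e₂, hne12, he₁, he₂⟩ := two_distinct_edges A hA h2A
      exact gstar_contra hG hZA hc (by rwa [hZAlen]) hodd hne12
        (by rw [Walk.edges_append]; refine List.mem_append_right _ ?_; rwa [Walk.edges_reverse, List.mem_reverse])
        (hedge e₁ |>.mp (hAe he₁))
        (by rw [Walk.edges_append]; refine List.mem_append_right _ ?_; rwa [Walk.edges_reverse, List.mem_reverse])
        (hedge e₂ |>.mp (hAe he₂))
        (by rw [Walk.edges_append]; exact List.mem_append_left _ he₀Q) he₀c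
    obtain ⟨hadj, hmemA⟩ := edge_of_length_one A hA1'
    refine ⟨hadj, (hedge _).mp (hAe hmemA), B, hB, fun x hx' => (hmem x).mp (hBsup x hx'), by omega⟩
  · have hZB : (Q.append B).IsCycle :=
      two_paths_append_isCycle hQ hB hx hshareB (by omega)
    have hZBlen : (Q.append B).length = Q.length + B.length := by
      rw [Walk.length_append]
    have hB1' : B.length = 1 := by
      by_contra hne1
      have h2B : 2 ≤ B.length := by omega
      obtain ⟨e₁, e₂, hne12, he₁, he₂⟩ := two_distinct_edges B hB h2B
      exact gstar_contra hG hZB hc (by rwa [hZBlen]) hodd hne12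
        (by rw [Walk.edges_append]; exact List.mem_append_right _ he₁)
        (hedge e₁ |>.mp (hBe he₁))
        (by rw [Walk.edges_append]; exact List.mem_append_right _ he₂)
        (hedge e₂ |>.mp (hBe he₂))
        (by rw [Walk.edges_append]; exact List.mem_append_left _ he₀Q) he₀c
    obtain ⟨hadj, hmemB⟩ := edge_of_length_one B hB1'
    refine ⟨hadj.symm, by rw [Sym2.eq_swap]; exact (hedge _).mp (hBe hmemB),
      A.reverse, hA.reverse, ?_, ?_⟩
    · intro x hx'
      rw [Walk.support_reverse, List.mem_reverse] at hx'
      exact (hmem x).mp (hAsup x hx')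
    · rw [Walk.length_reverse]; omega

lemma even_interior_path
    (hlongest : ∀ (w : V) (c' : G.Walk w w), c'.IsCycle → Odd c'.length →
      c'.length ≤ c.length)
    (hodd : Odd c.length) (hx : x₁ ≠ x₂)
    {R : G.Walk x₂ x₁} (hR : R.IsPath) (hRsup : ∀ x ∈ R.support, x ∈ c.support)
    (hRlen : 1 + R.length = c.length)
    {W : G.Walk x₁ x₂} (hW : W.IsPath) (hWlen : 2 ≤ W.length)
    (hWint : ∀ x ∈ W.support, x ≠ x₁ → x ≠ x₂ → x ∉ c.support) : Even W.length := by
  by_contra hoddW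
  rw [Nat.not_even_iff_odd] at hoddW
  have hshare : ∀ x ∈ W.support, x ∈ R.support → x = x₁ ∨ x = x₂ := by
    intro x hxW hxR
    by_cases e1 : x = x₁
    · exact Or.inl e1
    by_cases e2 : x = x₂
    · exact Or.inr e2
    exact absurd (hRsup x hxR) (hWint x hxW e1 e2)
  have hZ : (W.append R).IsCycle :=
    two_paths_append_isCycle hW hR hx hshare (by omega)
  have hZodd : Odd (W.append R).length := by
    rw [Walk.length_append, Nat.odd_iff] at *
    omega
  have := hlongest x₁ (W.append R) hZ hZodd
  rw [Walk.length_append] at this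
  omega

lemma toolE (hG : InGStar G)
    (hlongest : ∀ (w : V) (c' : G.Walk w w), c'.IsCycle → Odd c'.length →
      c'.length ≤ c.length)
    (hodd : Odd c.length) (hx : x₁ ≠ x₂) (hadj : G.Adj x₁ x₂)
    {R : G.Walk x₂ x₁} (hR : R.IsPath) (hRsup : ∀ x ∈ R.support, x ∈ c.support)
    (hRlen : 1 + R.length = c.length)
    {W W' : G.Walk x₁ x₂} (hW : W.IsPath) (hW' : W'.IsPath)
    (hWlen : 2 ≤ W.length) (hW'len : 2 ≤ W'.length)
    (hWint : ∀ x ∈ W.support, x ≠ x₁ → x ≠ x₂ → x ∉ c.support)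
    (hW'int : ∀ x ∈ W'.support, x ≠ x₁ → x ≠ x₂ → x ∉ c.support)
    {ed ed' : Sym2 V}
    (hed : ed ∈ W.edges) (hed2 : ed ∈ W'.edges)
    (hed' : ed' ∈ W'.edges) (hed'2 : ed' ∉ W.edges) : False := by
  have heW : s(x₂, x₁) ∉ W.edges := by
    rw [Sym2.eq_swap]
    intro hmm
    have := length_eq_one_of_edge_ends hW hmm
    omega
  have heW' : s(x₂, x₁) ∉ W'.edges := by
    rw [Sym2.eq_swap]
    intro hmm
    have := length_eq_one_of_edge_ends hW' hmm
    omega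
  have hqe : (Walk.cons hadj.symm Walk.nil : G.Walk x₂ x₁).IsPath := by
    rw [Walk.cons_isPath_iff]
    exact ⟨Walk.IsPath.nil, by simpa using hx.symm⟩
  have hqshare : ∀ (W₀ : G.Walk x₁ x₂), ∀ x ∈ W₀.support,
      x ∈ (Walk.cons hadj.symm Walk.nil : G.Walk x₂ x₁).support → x = x₁ ∨ x = x₂ := by
    intro W₀ x _ hx'
    simp only [Walk.support_cons, Walk.support_nil, List.mem_cons, List.mem_singleton] at hx'
    tauto
  have hZ : (W.append (Walk.cons hadj.symm Walk.nil)).IsCycle :=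
    two_paths_append_isCycle hW hqe hx (hqshare W) (by omega)
  have hZ' : (W'.append (Walk.cons hadj.symm Walk.nil)).IsCycle :=
    two_paths_append_isCycle hW' hqe hx (hqshare W') (by omega)
  have hWev := even_interior_path hlongest hodd hx hR hRsup hRlen hW hWlen hWint
  have hW'ev := even_interior_path hlongest hodd hx hR hRsup hRlen hW' hW'len hW'int
  have hcons1 : (Walk.cons hadj.symm Walk.nil : G.Walk x₂ x₁).length = 1 := by simp
  have hZodd : Odd (W.append (Walk.cons hadj.symm Walk.nil)).length := by
    rw [Walk.length_append, hcons1]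
    exact hWev.add_one
  have hZ'odd : Odd (W'.append (Walk.cons hadj.symm Walk.nil)).length := by
    rw [Walk.length_append, hcons1]
    exact hW'ev.add_one
  have hconse : (Walk.cons hadj.symm Walk.nil : G.Walk x₂ x₁).edges = [s(x₂, x₁)] := by simp
  have hedne : ed ≠ s(x₂, x₁) := fun hmm => heW (hmm ▸ hed)
  refine gstar_contra hG hZ' hZ hZ'odd hZodd hedne
    (by rw [Walk.edges_append]; exact List.mem_append_left _ hed2)
    (by rw [Walk.edges_append]; exact List.mem_append_left _ hed)
    (by rw [Walk.edges_append, hconse]; exact List.mem_append_right _ (by simp))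
    (by rw [Walk.edges_append, hconse]; exact List.mem_append_right _ (by simp))
    (by rw [Walk.edges_append]; exact List.mem_append_left _ hed')
    (by
      rw [Walk.edges_append, hconse]
      intro hmm
      rcases List.mem_append.mp hmm with h | h
      · exact hed'2 h
      · rw [List.mem_singleton] at h
        exact heW' (h ▸ hed'))

end Context

end Stmt19

end Stmt19Helpers

/-- let `c` be a longest odd cycle (length ≥ 5) of a 2-connected
`G ∈ G*` and `{x₁,x₂}` the common touching set of all vertices outside `c`.
Then every connected component of `G − V(c)` is a path whose endpoints are the
unique neighbors of `x₁` and `x₂` in the component, and whose internal vertices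
have all their `G`-neighbors on the path. -/
theorem stmt19 {V : Type*} (G : SimpleGraph V) (hG : InGStar G) (h2 : TwoConn G)
    (u : V) (c : G.Walk u u) (hc : c.IsCycle) (hodd : Odd c.length)
    (hlongest : ∀ (w : V) (c' : G.Walk w w), c'.IsCycle → Odd c'.length →
      c'.length ≤ c.length)
    (hlen : 5 ≤ c.length) (x₁ x₂ : V) (hx : x₁ ≠ x₂)
    (htouch : ∀ v : V, v ∉ c.support → ∀ w : V,
      Touches G c v w ↔ (w = x₁ ∨ w = x₂)) :
    ∀ K : (G.induce {v | v ∉ c.support}).ConnectedComponent,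
      ∃ (v₁ v₂ : {v | v ∉ c.support})
        (p : (G.induce {v | v ∉ c.support}).Walk v₁ v₂),
        p.IsPath ∧
        (∀ x : {v | v ∉ c.support}, x ∈ K.supp ↔ x ∈ p.support) ∧
        G.Adj x₁ ↑v₁ ∧ G.Adj x₂ ↑v₂ ∧
        (∀ x ∈ K.supp, G.Adj x₁ ↑x → x = v₁) ∧
        (∀ x ∈ K.supp, G.Adj x₂ ↑x → x = v₂) ∧
        (∀ x ∈ p.support, x ≠ v₁ → x ≠ v₂ →
          ∀ y : V, G.Adj ↑x y → ∃ z ∈ p.support, ↑z = y) := by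
  classical
  intro K
  obtain ⟨r, hr⟩ := K.exists_rep
  have hrS : (r : V) ∉ c.support := r.2
  -- x₁, x₂ are on c
  have h1mem : x₁ ∈ c.support := ((htouch r hrS x₁).mpr (Or.inl rfl)).1
  have h2mem : x₂ ∈ c.support := ((htouch r hrS x₂).mpr (Or.inr rfl)).1
  -- extraction of touching paths
  have extract : ∀ v : V, v ∉ c.support → ∀ w : V, w = x₁ ∨ w = x₂ →
      ∃ (v' : V) (q : G.Walk v v') (hadj : G.Adj v' w), v' ∉ c.support ∧ q.IsPath ∧
        (∀ x ∈ q.support, x ∉ c.support) := by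
    intro v hv w hw
    obtain ⟨hwmem, p, hp, hmeet⟩ := (htouch v hv w).mpr hw
    have hvw : v ≠ w := fun h => hv (h ▸ hwmem)
    obtain ⟨v', q, hadj, heq⟩ := Stmt19.exists_concat p hvw
    have hsupp : p.support = q.support ++ [w] := by
      rw [heq, Walk.support_concat]
    have hnd := hp.support_nodup
    rw [hsupp, List.nodup_append] at hnd
    have hwq : w ∉ q.support := fun hmm => hnd.2.2 _ hmm _ (List.mem_singleton_self _) rfl
    have hqS : ∀ x ∈ q.support, x ∉ c.support := by
      intro x hx' hxc
      have hxp : x ∈ p.support := by rw [hsupp]; exact List.mem_append_left _ hx'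
      exact hwq ((hmeet x hxp hxc) ▸ hx')
    refine ⟨v', q, hadj, hqS v' q.end_mem_support, ?_, hqS⟩
    rw [Walk.isPath_def]
    exact hnd.1
  -- first neighbor a₁ of x₁ in the component of r
  obtain ⟨a₁, q₁, hadj₁, ha₁, hq₁, hq₁S⟩ := extract r hrS x₁ (Or.inl rfl)
  -- touching path from a₁ to x₂
  obtain ⟨_, p₂, hp₂, hmeet₂⟩ := (htouch a₁ ha₁ x₂).mpr (Or.inr rfl)
  -- the basic x₁ - x₂ path through the component
  have hx₁p₂ : x₁ ∉ p₂.support := by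
    intro hmm
    exact hx (hmeet₂ x₁ hmm h1mem)
  set W : G.Walk x₁ x₂ := Walk.cons hadj₁.symm p₂ with hW_def
  have hWpath : W.IsPath := hp₂.cons hx₁p₂
  have ha₁x₂ : a₁ ≠ x₂ := fun h => ha₁ (h ▸ h2mem)
  have hp₂pos : 0 < p₂.length := Stmt19.length_pos_of_ne p₂ ha₁x₂
  have hWlen : 2 ≤ W.length := by
    rw [hW_def, Walk.length_cons]
    omega
  have hWint : ∀ x ∈ W.support, x ≠ x₁ → x ≠ x₂ → x ∉ c.support := by
    intro x hx' hne1 hne2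
    rw [hW_def, Walk.support_cons, List.mem_cons] at hx'
    rcases hx' with rfl | hx'
    · exact absurd rfl hne1
    · exact fun hxc => hne2 (hmeet₂ x hx' hxc)
  obtain ⟨hadj₁₂, he_c, R, hR, hRsup, hRlen⟩ :=
    Stmt19.arc_exists hG hc hodd hx h1mem h2mem hWpath hWlen hWint
  -- interior of W is in S
  have hWsub : ∀ x ∈ p₂.support, x ≠ x₂ → x ∉ c.support :=
    fun x hx' hne2 hxc => hne2 (hmeet₂ x hx' hxc)
  have ha₁W : a₁ ∈ W.support := by
    rw [hW_def, Walk.support_cons]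
    exact List.mem_cons_of_mem _ p₂.start_mem_support
  have hx₂W : x₂ ∈ W.support := W.end_mem_support
  have hx₁W : x₁ ∈ W.support := W.start_mem_support
  -- THE SPANNING CLAIM
  have hspan : ∀ z : {v | v ∉ c.support},
      (G.induce {v | v ∉ c.support}).connectedComponentMk z =
      (G.induce {v | v ∉ c.support}).connectedComponentMk ⟨a₁, ha₁⟩ →
      (z : V) ∈ W.support := by
    intro z hz
    by_contra hzW
    obtain ⟨pw⟩ := ConnectedComponent.exact hz
    obtain ⟨ph, hph_supp⟩ := Stmt19.walk_down pw
    have hphS : ∀ y ∈ ph.support, y ∉ c.support := by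
      intro y hy
      rw [hph_supp] at hy
      obtain ⟨y', -, rfl⟩ := List.mem_map.mp hy
      exact y'.2
    have hppS : ∀ y ∈ (ph.toPath : G.Walk (z : V) a₁).support, y ∉ c.support :=
      fun y hy => hphS y (ph.support_toPath_subset hy)
    obtain ⟨t, qt, htW, hfirst, hsub, hqtpath', -⟩ :=
      Stmt19.exists_prefix_until (ph.toPath : G.Walk (z : V) a₁) (· ∈ W.support) ha₁W
    have hqtS : ∀ y ∈ qt.support, y ∉ c.support := fun y hy => hppS y (hsub y hy)
    have htS : t ∉ c.support := hqtS t qt.end_mem_support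
    have htx₁ : t ≠ x₁ := fun h => htS (h ▸ h1mem)
    have htx₂ : t ≠ x₂ := fun h => htS (h ▸ h2mem)
    have hzt : (z : V) ≠ t := fun h => hzW (h ▸ htW)
    obtain ⟨h', qt', hadj', hqteq⟩ := Stmt19.exists_concat qt hzt
    have hh'qt : h' ∈ qt.support := by
      rw [hqteq, Walk.support_concat]
      exact List.mem_append_left _ qt'.end_mem_support
    have hh't : h' ≠ t := hadj'.ne
    have hh'W : h' ∉ W.support := fun hmm => hh't (hfirst h' hh'qt hmm)
    have hh'S : h' ∉ c.support := hqtS h' hh'qt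
    -- a path from h' to x₁ avoiding t
    obtain ⟨pw₂⟩ := (h2.2 t).preconnected ⟨h', hh't⟩ ⟨x₁, htx₁.symm⟩
    obtain ⟨ph₂, hph₂supp⟩ := Stmt19.walk_down pw₂
    have hph₂t : ∀ y ∈ ph₂.support, y ≠ t := by
      intro y hy
      rw [hph₂supp] at hy
      obtain ⟨y', -, rfl⟩ := List.mem_map.mp hy
      exact y'.2
    obtain ⟨s, ρ, hPs, hfirst₂, hsub₂, hρpath', -⟩ :=
      Stmt19.exists_prefix_until (ph₂.toPath : G.Walk h' x₁)
        (fun y => y ∈ W.support ∨ y ∈ c.support) (Or.inl hx₁W)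
    have hρpath : ρ.IsPath := hρpath' (ph₂.toPath).2
    have hρt : ∀ y ∈ ρ.support, y ≠ t :=
      fun y hy => hph₂t y (ph₂.support_toPath_subset (hsub₂ y hy))
    have hρoffW : ∀ y ∈ ρ.support, y ≠ s → y ∉ W.support ∧ y ∉ c.support := by
      intro y hy hys
      constructor
      · exact fun hmm => hys (hfirst₂ y hy (Or.inl hmm))
      · exact fun hmm => hys (hfirst₂ y hy (Or.inr hmm))
    have hsW : s ∈ W.support := by
      rcases hPs with h | h
      · exact h
      · have htch : Touches G c h' s :=
          ⟨h, ρ, hρpath, fun y hy hyc => hfirst₂ y hy (Or.inr hyc)⟩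
        rcases (htouch h' hh'S s).mp htch with rfl | rfl
        · exact hx₁W
        · exact hx₂W
    have hst : s ≠ t := fun h => (hρt s ρ.end_mem_support) h
    have hh's : h' ≠ s := fun h => hh'W (h ▸ hsW)
    set W1 := W.takeUntil t htW with hW1_def
    set W2 := W.dropUntil t htW with hW2_def
    have hW1path : W1.IsPath := hWpath.takeUntil htW
    have hW2path : W2.IsPath := hWpath.dropUntil htW
    have hWsplit : s ∈ W1.support ∨ s ∈ W2.support := by
      have hy' : s ∈ (W1.append W2).support := by rw [W.take_spec htW]; exact hsW
      rw [Walk.support_append, List.mem_append] at hy'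
      exact hy'.imp id List.mem_of_mem_tail
    have hinterW : ∀ y, y ∈ W1.support → y ∈ W2.support → y = t :=
      fun y => Stmt19.take_drop_inter hWpath htW
    have hW1pos : 0 < W1.length := Stmt19.length_pos_of_ne W1 htx₁.symm
    have hW2pos : 0 < W2.length := Stmt19.length_pos_of_ne W2 htx₂
    have hW1sub : ∀ y ∈ W1.support, y ∈ W.support := W.support_takeUntil_subset htW
    have hW2sub : ∀ y ∈ W2.support, y ∈ W.support := W.support_dropUntil_subset htW
    have hed'notW : s(t, h') ∉ W.edges :=
      fun hmm => hh'W (W.snd_mem_support_of_mem_edges hmm)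
    rcases hWsplit with hsW1 | hsW2
    · -- s comes before t on W
      set W1a := W1.takeUntil s hsW1 with hW1a_def
      have hW1apath : W1a.IsPath := hW1path.takeUntil hsW1
      have hW1asub : ∀ y ∈ W1a.support, y ∈ W1.support := W1.support_takeUntil_subset hsW1
      have htail_path : (Walk.cons hadj' W2).IsPath :=
        hW2path.cons (fun hmm => hh'W (hW2sub h' hmm))
      have hmidpath : (ρ.reverse.append (Walk.cons hadj' W2)).IsPath := by
        refine Stmt19.append_isPath hρpath.reverse htail_path ?_
        intro y hy hy'
        rw [Walk.support_reverse, List.mem_reverse] at hy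
        rw [Walk.support_cons, List.mem_cons] at hy'
        rcases hy' with rfl | hy'
        · rfl
        · by_cases hys : y = s
          · subst hys; exact absurd (hinterW y hsW1 hy') hst
          · exact absurd (hW2sub y hy') (hρoffW y hy hys).1
      have htW1a : t ∉ W1a.support := by
        intro hmm
        exact hst (Stmt19.take_drop_inter hW1path hsW1 hmm
          (W1.dropUntil s hsW1).end_mem_support).symm
      have hW'path : (W1a.append (ρ.reverse.append (Walk.cons hadj' W2))).IsPath := by
        refine Stmt19.append_isPath hW1apath hmidpath ?_
        intro y hy hy'
        rw [Walk.support_append, List.mem_append] at hy'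
        rcases hy' with hy' | hy'
        · rw [Walk.support_reverse, List.mem_reverse] at hy'
          by_cases hys : y = s
          · exact hys
          · exact absurd (hW1sub y (hW1asub y hy)) (hρoffW y hy' hys).1
        · rw [Walk.support_cons, List.tail_cons] at hy'
          have hyt : y = t := hinterW y (hW1asub y hy) hy'
          exact absurd (hyt ▸ hy) htW1a
      have hW'len : 2 ≤ (W1a.append (ρ.reverse.append (Walk.cons hadj' W2))).length := by
        rw [Walk.length_append, Walk.length_append, Walk.length_cons]
        omega
      have hW'int : ∀ y ∈ (W1a.append (ρ.reverse.append (Walk.cons hadj' W2))).support,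
          y ≠ x₁ → y ≠ x₂ → y ∉ c.support := by
        intro y hy hne1 hne2
        rw [Walk.support_append, List.mem_append] at hy
        rcases hy with hy | hy
        · exact hWint y (hW1sub y (hW1asub y hy)) hne1 hne2
        · have hy2 := List.mem_of_mem_tail hy
          rw [Walk.support_append, List.mem_append] at hy2
          rcases hy2 with hy2 | hy2
          · rw [Walk.support_reverse, List.mem_reverse] at hy2
            by_cases hys : y = s
            · exact hWint y (hys ▸ hsW) hne1 hne2
            · exact (hρoffW y hy2 hys).2
          · have hy3 := List.mem_of_mem_tail hy2
            rw [Walk.support_cons, List.mem_cons] at hy3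
            rcases hy3 with rfl | hy3
            · exact hh'S
            · exact hWint y (hW2sub y hy3) hne1 hne2
      obtain ⟨ed, hed⟩ := Stmt19.exists_edge W2 hW2pos
      refine Stmt19.toolE hG hlongest hodd hx hadj₁₂ hR hRsup hRlen hWpath hW'path hWlen
        hW'len hWint hW'int (W.edges_dropUntil_subset htW hed) ?_ ?_
        ((fun hmm => hh'W (W.fst_mem_support_of_mem_edges hmm)) :
          s(h', t) ∉ W.edges)
      · rw [Walk.edges_append]
        refine List.mem_append_right _ ?_
        rw [Walk.edges_append]
        refine List.mem_append_right _ ?_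
        rw [Walk.edges_cons]
        exact List.mem_cons_of_mem _ hed
      · rw [Walk.edges_append]
        refine List.mem_append_right _ ?_
        rw [Walk.edges_append]
        refine List.mem_append_right _ ?_
        rw [Walk.edges_cons]
        exact List.mem_cons_self
    · -- s comes after t on W
      set X := W2.dropUntil s hsW2 with hX_def
      have hXpath : X.IsPath := hW2path.dropUntil hsW2
      have hXsub : ∀ y ∈ X.support, y ∈ W2.support := W2.support_dropUntil_subset hsW2
      have htX : t ∉ X.support := by
        intro hmm
        exact hst (Stmt19.take_drop_inter hW2path hsW2
          (W2.takeUntil s hsW2).start_mem_support hmm).symm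
      have hinner : (ρ.append X).IsPath := by
        refine Stmt19.append_isPath hρpath hXpath ?_
        intro y hy hy'
        by_cases hys : y = s
        · exact hys
        · exact absurd (hW2sub y (hXsub y hy')) (hρoffW y hy hys).1
      have hmidpath : (Walk.cons hadj'.symm (ρ.append X)).IsPath := by
        refine hinner.cons ?_
        rw [Walk.support_append, List.mem_append]
        rintro (hmm | hmm)
        · exact (hρt t hmm) rfl
        · exact htX (List.mem_of_mem_tail hmm)
      have hW'path : (W1.append (Walk.cons hadj'.symm (ρ.append X))).IsPath := by
        refine Stmt19.append_isPath hW1path hmidpath ?_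
        intro y hy hy'
        rw [Walk.support_cons, List.mem_cons] at hy'
        rcases hy' with rfl | hy'
        · rfl
        · rw [Walk.support_append, List.mem_append] at hy'
          rcases hy' with hy' | hy'
          · by_cases hys : y = s
            · subst hys; exact absurd (hinterW y hy hsW2) hst
            · exact absurd (hW1sub y hy) (hρoffW y hy' hys).1
          · have hy2 : y ∈ X.support := List.mem_of_mem_tail hy'
            have hyt : y = t := hinterW y hy (hXsub y hy2)
            exact absurd (hyt ▸ hy2) htX
      have hW'len : 2 ≤ (W1.append (Walk.cons hadj'.symm (ρ.append X))).length := by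
        rw [Walk.length_append, Walk.length_cons]
        omega
      have hW'int : ∀ y ∈ (W1.append (Walk.cons hadj'.symm (ρ.append X))).support,
          y ≠ x₁ → y ≠ x₂ → y ∉ c.support := by
        intro y hy hne1 hne2
        rw [Walk.support_append, List.mem_append] at hy
        rcases hy with hy | hy
        · exact hWint y (hW1sub y hy) hne1 hne2
        · have hy2 := List.mem_of_mem_tail hy
          rw [Walk.support_cons, List.mem_cons] at hy2
          rcases hy2 with rfl | hy2
          · exact htS
          · rw [Walk.support_append, List.mem_append] at hy2
            rcases hy2 with hy2 | hy2
            · by_cases hys : y = s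
              · exact hWint y (hys ▸ hsW) hne1 hne2
              · exact (hρoffW y hy2 hys).2
            · exact hWint y (hW2sub y (hXsub y (List.mem_of_mem_tail hy2))) hne1 hne2
      obtain ⟨ed, hed⟩ := Stmt19.exists_edge W1 hW1pos
      refine Stmt19.toolE hG hlongest hodd hx hadj₁₂ hR hRsup hRlen hWpath hW'path hWlen
        hW'len hWint hW'int (W.edges_takeUntil_subset htW hed) ?_ ?_ hed'notW
      · rw [Walk.edges_append]
        exact List.mem_append_left _ hed
      · rw [Walk.edges_append]
        refine List.mem_append_right _ ?_
        rw [Walk.edges_cons]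
        exact List.mem_cons_self

  -- decompose p₂
  obtain ⟨a₂, q₂, hadj₂, hp₂eq⟩ := Stmt19.exists_concat p₂ ha₁x₂
  have hp₂supp : p₂.support = q₂.support ++ [x₂] := by
    rw [hp₂eq, Walk.support_concat]
  have hndp₂ := hp₂.support_nodup
  rw [hp₂supp, List.nodup_append] at hndp₂
  have hx₂q₂ : x₂ ∉ q₂.support := fun hmm => hndp₂.2.2 _ hmm _ (List.mem_singleton_self _) rfl
  have hq₂S : ∀ x ∈ q₂.support, x ∉ c.support := by
    intro x hx'
    exact hWsub x (by rw [hp₂supp]; exact List.mem_append_left _ hx') (fun h => hx₂q₂ (h ▸ hx'))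
  have hq₂path : q₂.IsPath := by rw [Walk.isPath_def]; exact hndp₂.1
  have ha₂ : a₂ ∉ c.support := hq₂S a₂ q₂.end_mem_support
  -- lift q₂ to the induced graph
  obtain ⟨p, hp_supp⟩ := Stmt19.walk_up (S := {v | v ∉ c.support}) q₂ hq₂S ha₁ ha₂
  have hppath : p.IsPath := by
    rw [Walk.isPath_def]
    have := hq₂path.support_nodup
    rw [← hp_supp] at this
    exact this.of_map
  -- reachability basics
  have hKa₁ : K = (G.induce {v | v ∉ c.support}).connectedComponentMk ⟨a₁, ha₁⟩ := by
    obtain ⟨q₁', hq₁'⟩ := Stmt19.walk_up (S := {v | v ∉ c.support}) q₁ hq₁S r.2 ha₁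
    have hr' : (G.induce {v | v ∉ c.support}).connectedComponentMk r = K := hr
    rw [← hr']
    exact ConnectedComponent.sound ⟨q₁'⟩
  have hmemW_of_K : ∀ x : {v | v ∉ c.support}, x ∈ K.supp → (x : V) ∈ p₂.support := by
    intro x hxK
    rw [ConnectedComponent.mem_supp_iff, hKa₁] at hxK
    have hxW := hspan x hxK
    rw [hW_def, Walk.support_cons, List.mem_cons] at hxW
    rcases hxW with h | h
    · exact absurd (h ▸ h1mem) x.2
    · exact h
  have hsupp_iff : ∀ x : {v | v ∉ c.support}, x ∈ K.supp ↔ x ∈ p.support := by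
    intro x
    constructor
    · intro hxK
      have hxp₂ := hmemW_of_K x hxK
      rw [hp₂supp, List.mem_append] at hxp₂
      rcases hxp₂ with h | h
      · rw [← hp_supp] at h
        obtain ⟨y, hy, hyx⟩ := List.mem_map.mp h
        have : y = x := Subtype.ext hyx
        exact this ▸ hy
      · exact absurd ((by simpa using h : (x : V) = x₂) ▸ h2mem) x.2
    · intro hxp
      rw [ConnectedComponent.mem_supp_iff, hKa₁]
      exact ConnectedComponent.sound (Stmt19.reachable_of_mem_support p hxp).symm
  -- uniqueness of the neighbor of x₁
  have huniq₁ : ∀ x : {v | v ∉ c.support}, x ∈ K.supp → G.Adj x₁ ↑x → (x : V) = a₁ := by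
    intro x hxK hadjx
    by_contra hne
    have hxp₂ : (x : V) ∈ p₂.support := hmemW_of_K x hxK
    have hxx₂ : (x : V) ≠ x₂ := fun h => x.2 (h ▸ h2mem)
    set Wa := p₂.dropUntil (x : V) hxp₂ with hWa_def
    have hWa_path : Wa.IsPath := hp₂.dropUntil hxp₂
    have hWa_sub : ∀ z ∈ Wa.support, z ∈ p₂.support :=
      fun z hz => p₂.support_dropUntil_subset hxp₂ hz
    have hx₁Wa : x₁ ∉ Wa.support := fun hmm => hx₁p₂ (hWa_sub x₁ hmm)
    have hW2path : (Walk.cons hadjx Wa).IsPath := hWa_path.cons hx₁Wa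
    have hWa_pos : 0 < Wa.length := Stmt19.length_pos_of_ne Wa hxx₂
    have hW2len : 2 ≤ (Walk.cons hadjx Wa).length := by rw [Walk.length_cons]; omega
    have hW2int : ∀ z ∈ (Walk.cons hadjx Wa).support, z ≠ x₁ → z ≠ x₂ → z ∉ c.support := by
      intro z hz hne1 hne2
      rw [Walk.support_cons, List.mem_cons] at hz
      rcases hz with rfl | hz
      · exact absurd rfl hne1
      · exact hWsub z (hWa_sub z hz) hne2
    obtain ⟨ed, hed⟩ := Stmt19.exists_edge Wa hWa_pos
    have hedW : ed ∈ W.edges := by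
      rw [hW_def, Walk.edges_cons]
      exact List.mem_cons_of_mem _ (p₂.edges_dropUntil_subset hxp₂ hed)
    have hed'W : s(x₁, (x : V)) ∉ W.edges := by
      rw [hW_def, Walk.edges_cons, List.mem_cons]
      rintro (h | h)
      · rw [Sym2.eq_iff] at h
        rcases h with ⟨-, h⟩ | ⟨h1, -⟩
        · exact hne h
        · exact ha₁ (h1 ▸ h1mem)
      · exact hx₁p₂ (p₂.fst_mem_support_of_mem_edges h)
    exact Stmt19.toolE hG hlongest hodd hx hadj₁₂ hR hRsup hRlen hWpath hW2path hWlen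
      hW2len hWint hW2int hedW
      (by rw [Walk.edges_cons]; exact List.mem_cons_of_mem _ hed)
      (by rw [Walk.edges_cons]; exact List.mem_cons_self) hed'W

  -- uniqueness of the neighbor of x₂
  have huniq₂ : ∀ x : {v | v ∉ c.support}, x ∈ K.supp → G.Adj x₂ ↑x → (x : V) = a₂ := by
    intro x hxK hadjx
    by_contra hne
    have hxW : (x : V) ∈ W.support := by
      rw [ConnectedComponent.mem_supp_iff, hKa₁] at hxK
      exact hspan x hxK
    have hxx₂ : (x : V) ≠ x₂ := fun h => x.2 (h ▸ h2mem)
    have hxx₁ : (x : V) ≠ x₁ := fun h => x.2 (h ▸ h1mem)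
    set Wb := W.takeUntil (x : V) hxW with hWb_def
    have hWb_path : Wb.IsPath := hWpath.takeUntil hxW
    have hx₂Wb : x₂ ∉ Wb.support := fun hmm =>
      hxx₂ (Stmt19.take_drop_inter hWpath hxW hmm
        (W.dropUntil (x : V) hxW).end_mem_support).symm
    set W3 := Wb.concat hadjx.symm with hW3_def
    have hW3path : W3.IsPath := Stmt19.isPath_concat hWb_path hadjx.symm hx₂Wb
    have hWb_pos : 0 < Wb.length := Stmt19.length_pos_of_ne Wb hxx₁.symm
    have hW3len : 2 ≤ W3.length := by
      rw [hW3_def, Walk.concat, Walk.length_append]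
      simp only [Walk.length_cons, Walk.length_nil]
      omega
    have hWb_sub : ∀ z ∈ Wb.support, z ∈ W.support := W.support_takeUntil_subset hxW
    have hW3int : ∀ z ∈ W3.support, z ≠ x₁ → z ≠ x₂ → z ∉ c.support := by
      intro z hz hne1 hne2
      rw [hW3_def, Walk.support_concat, List.mem_append] at hz
      rcases hz with hz | hz
      · exact hWint z (hWb_sub z hz) hne1 hne2
      · exact absurd (by simpa using hz) hne2
    obtain ⟨ed, hed⟩ := Stmt19.exists_edge Wb hWb_pos
    have hedW : ed ∈ W.edges := W.edges_takeUntil_subset hxW hed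
    have hedW3 : ed ∈ W3.edges := by
      rw [hW3_def, Walk.edges_concat, List.concat_eq_append]
      exact List.mem_append_left _ hed
    have hed'W3 : s((x : V), x₂) ∈ W3.edges := by
      rw [hW3_def, Walk.edges_concat, List.concat_eq_append]
      exact List.mem_append_right _ (by simp)
    have hed'W : s((x : V), x₂) ∉ W.edges := by
      rw [hW_def, Walk.edges_cons, List.mem_cons]
      rintro (h | h)
      · rw [Sym2.eq_iff] at h
        rcases h with ⟨h1, h2⟩ | ⟨h1, h2⟩
        · exact ha₁ (h2 ▸ h2mem)
        · exact hx h2.symm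
      · rw [hp₂eq, Walk.edges_concat, List.concat_eq_append, List.mem_append] at h
        rcases h with h | h
        · exact hx₂q₂ (q₂.snd_mem_support_of_mem_edges h)
        · rw [List.mem_singleton, Sym2.eq_iff] at h
          rcases h with ⟨h1, h2⟩ | ⟨h1, h2⟩
          · exact hne h1
          · exact hxx₂ h1
    exact Stmt19.toolE hG hlongest hodd hx hadj₁₂ hR hRsup hRlen hWpath hW3path hWlen
      hW3len hWint hW3int hedW hedW3 hed'W3 hed'W

  refine ⟨⟨a₁, ha₁⟩, ⟨a₂, ha₂⟩, p, hppath, hsupp_iff, hadj₁.symm, hadj₂.symm,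
    fun x hxK hadjx => Subtype.ext (huniq₁ x hxK hadjx),
    fun x hxK hadjx => Subtype.ext (huniq₂ x hxK hadjx), ?_⟩
  -- internal vertices have neighbors only on the path
  intro x hxp hne1 hne2 y hadjy
  by_cases hyc : y ∈ c.support
  · exfalso
    have htch : Touches G c (↑x) y := by
      refine ⟨hyc, Walk.cons hadjy Walk.nil, ?_, ?_⟩
      · rw [Walk.cons_isPath_iff]
        exact ⟨Walk.IsPath.nil, by simpa using hadjy.ne⟩
      · intro z hz hzc
        simp only [Walk.support_cons, Walk.support_nil, List.mem_cons] at hz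
        rcases hz with rfl | hz
        · exact absurd hzc x.2
        · simpa using hz
    rcases (htouch (↑x) x.2 y).mp htch with rfl | rfl
    · exact hne1 (Subtype.ext (huniq₁ x ((hsupp_iff x).mpr hxp) hadjy.symm))
    · exact hne2 (Subtype.ext (huniq₂ x ((hsupp_iff x).mpr hxp) hadjy.symm))
  · have hyK : (⟨y, hyc⟩ : {v | v ∉ c.support}) ∈ K.supp := by
      rw [ConnectedComponent.mem_supp_iff]
      have hadj' : (G.induce {v | v ∉ c.support}).Adj x ⟨y, hyc⟩ := by
        simp only [comap_adj, Function.Embedding.coe_subtype]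
        exact hadjy
      rw [← (ConnectedComponent.mem_supp_iff _ _).mp ((hsupp_iff x).mpr hxp)]
      exact ConnectedComponent.sound ⟨(Walk.cons hadj' Walk.nil).reverse⟩
    exact ⟨⟨y, hyc⟩, (hsupp_iff _).mp hyK, rfl⟩
end
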